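/- Suppose the A-module Γ(𝓛_Φ) of global sections of the minimal sheaf on a fan Φ has stalk ℝ at the origin, each stalk 𝓛_{Φ,τ} at a cone τ of dimension k ≥ 1 is generated in degrees < k (as graded A-module), and each costalk Γ_{{τ}}𝓛_Φ = ker(𝓛_{Φ,τ} → Γ(∂τ, 𝓛_Φ)) is generated in degrees > k. Then End_{A_Φ}(𝓛_Φ) = ℝ (rigidity: every degree-0 endomorphism of 𝓛_Φ is a scalar). -/
import Mathlib


open Set

variable {V : Type} [AddCommGroup V] [Module ℝ V]

/-- A polyhedral cone: a finite intersection of closed halfspaces `{L ≥ 0}`. -/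
def IsPolyCone (σ : Set V) : Prop :=
  ∃ S : Finset (V →ₗ[ℝ] ℝ), σ = {v | ∀ L ∈ S, 0 ≤ L v}

/-- `τ` is a face of the cone `σ`. -/
def IsFaceOf (τ σ : Set V) : Prop :=
  ∃ L : V →ₗ[ℝ] ℝ, (∀ v ∈ σ, 0 ≤ L v) ∧ τ = {v ∈ σ | L v = 0}

/-- The dimension of a cone: the dimension of its linear span. -/
noncomputable def coneDim (σ : Set V) : ℕ :=
  Module.finrank ℝ (Submodule.span ℝ σ)

/-- A fan: a finite collection of polyhedral cones, closed under taking faces, such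
that the intersection of two cones is a face of each, containing the zero cone. -/
structure Fan (V : Type) [AddCommGroup V] [Module ℝ V] where
  cones : Finset (Set V)
  poly : ∀ σ ∈ cones, IsPolyCone σ
  face_mem : ∀ σ ∈ cones, ∀ τ : Set V, IsFaceOf τ σ → τ ∈ cones
  inter_face : ∀ σ ∈ cones, ∀ τ ∈ cones, IsFaceOf (σ ∩ τ) σ
  zero_mem : ({0} : Set V) ∈ cones

/-- The support of a fan. -/
def Fan.support (Φ : Fan V) : Set V := ⋃ σ ∈ Φ.cones, σ

/-- A fan is complete if its support is all of `V`. -/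
def Fan.IsComplete (Φ : Fan V) : Prop := Φ.support = univ

/-- A cone is simplicial if it is the convex hull of `coneDim σ` many rays spanned
by linearly independent vectors. -/
def IsSimplicialCone (σ : Set V) : Prop :=
  ∃ f : Fin (coneDim σ) → V, LinearIndependent ℝ f ∧
    σ = {v | ∃ c : Fin (coneDim σ) → ℝ, (∀ i, 0 ≤ c i) ∧ v = ∑ i, c i • f i}

def Fan.IsSimplicial (Φ : Fan V) : Prop := ∀ σ ∈ Φ.cones, IsSimplicialCone σ

/-- An edge of a cone: a 1-dimensional face. -/
def IsEdge (ρ σ : Set V) : Prop := IsFaceOf ρ σ ∧ coneDim ρ = 1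

/-- Minkowski sum of two subsets. -/
def setAdd (σ τ : Set V) : Set V := {x | ∃ a ∈ σ, ∃ b ∈ τ, x = a + b}

/-- An edge `ρ` of `σ` is free if all other edges of `σ` are contained in one facet
`τ`, and `σ = τ + ρ`. -/
def IsFreeEdge (ρ σ : Set V) : Prop :=
  IsEdge ρ σ ∧ ∃ τ : Set V, IsFaceOf τ σ ∧ coneDim τ = coneDim σ - 1 ∧
    (∀ ρ' : Set V, IsEdge ρ' σ → ρ' ≠ ρ → ρ' ⊆ τ) ∧ σ = setAdd τ ρ

/-- A cone is deficient if it has no free edge. -/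
def IsDeficient (σ : Set V) : Prop := ¬ ∃ ρ : Set V, IsFreeEdge ρ σ

/-- The singular subfan `Φˢ`: the (cones of the) minimal subfan of `Φ` containing
all deficient cones of `Φ`. -/
def Fan.singular (Φ : Fan V) : Set (Set V) :=
  {σ | σ ∈ Φ.cones ∧ ∃ τ ∈ Φ.cones, IsDeficient τ ∧ IsFaceOf σ τ}

/-- The star of a cone `σ` in the fan `Φ`. -/
def Fan.star (Φ : Fan V) (σ : Set V) : Set (Set V) := {τ | τ ∈ Φ.cones ∧ σ ⊆ τ}

/-- `[St(σ)]`: the minimal subfan containing the star of `σ`. -/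
def Fan.closedStar (Φ : Fan V) (σ : Set V) : Set (Set V) :=
  {ξ | ∃ τ ∈ Φ.star σ, IsFaceOf ξ τ}

/-- `∂St(σ)`. -/
def Fan.boundaryStar (Φ : Fan V) (σ : Set V) : Set (Set V) :=
  Φ.closedStar σ \ Φ.star σ

/-- The link of a cone. -/
def Fan.link (Φ : Fan V) (σ : Set V) : Set (Set V) :=
  {τ | τ ∈ Φ.boundaryStar σ ∧ τ ∩ σ = {0}}

/-- The relative interior `σ⁰` of a cone: the complement of its proper faces. -/
def coneInt (σ : Set V) : Set V :=
  σ \ ⋃ τ ∈ {τ : Set V | IsFaceOf τ σ ∧ τ ≠ σ}, τ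

/-- `l` is piecewise linear with respect to `Φ`. -/
def IsPWLinear (Φ : Fan V) (l : V → ℝ) : Prop :=
  ∀ σ ∈ Φ.cones, ∃ L : V →ₗ[ℝ] ℝ, ∀ v ∈ σ, l v = L v

/-- `l` is strictly convex on the complete fan `Φ`: for any two distinct
top-dimensional cones `σ, τ` the linear function agreeing with `l` on `σ` is
strictly smaller than `l` on the interior of `τ`. -/
def IsStrictlyConvex (Φ : Fan V) (l : V → ℝ) : Prop :=
  IsPWLinear Φ l ∧
  ∀ σ ∈ Φ.cones, coneDim σ = Module.finrank ℝ V →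
    ∀ L : V →ₗ[ℝ] ℝ, (∀ v ∈ σ, l v = L v) →
      ∀ τ ∈ Φ.cones, coneDim τ = Module.finrank ℝ V → τ ≠ σ →
        ∀ v ∈ coneInt τ, L v < l v

section AuxRigidity

lemma face_coneDim_lt {n : ℕ} {τ ρ : Set (Fin n → ℝ)} (h : IsFaceOf ρ τ) (hne : ρ ≠ τ) :
    coneDim ρ < coneDim τ := by
  obtain ⟨L, hL, hρ⟩ := h
  have hsub : ρ ⊆ τ := by rw [hρ]; exact fun v hv => hv.1
  have hle : Submodule.span ℝ ρ ≤ Submodule.span ℝ τ := Submodule.span_mono hsub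
  have hdle : coneDim ρ ≤ coneDim τ := Submodule.finrank_mono hle
  rcases lt_or_eq_of_le hdle with hlt | heq
  · exact hlt
  · exfalso
    have hspan : Submodule.span ℝ ρ = Submodule.span ℝ τ :=
      Submodule.eq_of_le_of_finrank_eq hle heq
    obtain ⟨v, hvτ, hvρ⟩ : ∃ v, v ∈ τ ∧ v ∉ ρ := by
      by_contra hcon
      push_neg at hcon
      exact hne (Set.Subset.antisymm hsub hcon)
    have hLv : L v ≠ 0 := fun h0 => hvρ (by rw [hρ]; exact ⟨hvτ, h0⟩)
    have hρker : Submodule.span ℝ ρ ≤ LinearMap.ker L := by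
      rw [Submodule.span_le]
      intro w hw
      rw [hρ] at hw
      exact LinearMap.mem_ker.mpr hw.2
    have hvmem : v ∈ Submodule.span ℝ ρ := hspan ▸ Submodule.subset_span hvτ
    exact hLv (hρker hvmem)

lemma polyCone_dim_zero {n : ℕ} {σ : Set (Fin n → ℝ)} (hp : IsPolyCone σ)
    (h : coneDim σ = 0) : σ = {0} := by
  obtain ⟨S, hS⟩ := hp
  have h0 : (0 : Fin n → ℝ) ∈ σ := by rw [hS]; intro L _; simp
  have hbot : Submodule.span ℝ σ = ⊥ := Submodule.finrank_eq_zero.mp h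
  apply Set.Subset.antisymm
  · intro v hv
    have hvs : v ∈ Submodule.span ℝ σ := Submodule.subset_span hv
    rw [hbot] at hvs
    simpa using hvs
  · intro v hv
    simp only [Set.mem_singleton_iff] at hv
    rw [hv]; exact h0

end AuxRigidity

/-- rigidity of the minimal sheaf.  Let `𝓛 = 𝓛_Φ` be a sheaf of
graded `A_Φ`-modules on a fan `Φ` (given by its graded stalks `M σ` and restriction
maps `r`), whose stalk at the origin is `ℝ` (one-dimensional, in degree `0`), whose
stalk at every cone `τ` of dimension `k ≥ 1` is generated in degrees `< k`, and
whose costalk `ker(𝓛_τ → Γ(∂τ, 𝓛))` at every such `τ` is generated in degrees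
`> k`.  Then every degree-`0` endomorphism of `𝓛_Φ` is multiplication by a scalar:
`End_{A_Φ}(𝓛_Φ) = ℝ`.  (Degrees are normalized so that linear functions in
`A = Sym(V*)` have degree `2`.) -/
theorem minimal_sheaf_rigidity {n : ℕ} (Φ : Fan (Fin n → ℝ))
    (M : Set (Fin n → ℝ) → Type)
    [∀ σ, AddCommGroup (M σ)] [∀ σ, Module (MvPolynomial (Fin n) ℝ) (M σ)]
    [∀ σ, Module ℝ (M σ)]
    [∀ σ, IsScalarTower ℝ (MvPolynomial (Fin n) ℝ) (M σ)]
    -- the restriction maps of the sheaf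
    (r : ∀ σ τ : Set (Fin n → ℝ), IsFaceOf τ σ →
      (M σ →ₗ[MvPolynomial (Fin n) ℝ] M τ))
    (hr_id : ∀ σ (h : IsFaceOf σ σ), r σ σ h = LinearMap.id)
    (hr_comp : ∀ σ τ ρ (h1 : IsFaceOf τ σ) (h2 : IsFaceOf ρ τ)
      (h3 : IsFaceOf ρ σ), (r τ ρ h2).comp (r σ τ h1) = r σ ρ h3)
    -- the grading of the stalks (linear functions acting in degree 2)
    (g : ∀ σ : Set (Fin n → ℝ), ℕ → Submodule ℝ (M σ))
    (hgInt : ∀ σ ∈ Φ.cones, DirectSum.IsInternal (g σ))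
    (hgSmul : ∀ σ ∈ Φ.cones, ∀ d : ℕ,
      ∀ p ∈ MvPolynomial.homogeneousSubmodule (Fin n) ℝ d,
      ∀ j : ℕ, ∀ x ∈ g σ j, p • x ∈ g σ (j + 2 * d))
    -- the stalk at the origin is `ℝ`, concentrated in degree 0
    (horigin : Module.finrank ℝ (M ({0} : Set (Fin n → ℝ))) = 1 ∧
      g ({0} : Set (Fin n → ℝ)) 0 = ⊤)
    -- the stalk at a cone `τ` of dimension `k ≥ 1` is generated in degrees `< k`
    (hstalk : ∀ τ ∈ Φ.cones, 1 ≤ coneDim τ →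
      (⊤ : Submodule (MvPolynomial (Fin n) ℝ) (M τ)) =
        Submodule.span (MvPolynomial (Fin n) ℝ)
          (⋃ j ∈ {j : ℕ | j < coneDim τ}, (g τ j : Set (M τ))))
    -- the costalk `ker(𝓛_τ → Γ(∂τ,𝓛))` is generated in degrees `> k`
    (hcostalk : ∀ τ ∈ Φ.cones, 1 ≤ coneDim τ →
      (⨅ (ρ : Set (Fin n → ℝ)) (h : IsFaceOf ρ τ ∧ ρ ≠ τ),
          LinearMap.ker (r τ ρ h.1)) =
        Submodule.span (MvPolynomial (Fin n) ℝ)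
          (⋃ j ∈ {j : ℕ | coneDim τ < j},
            (((⨅ (ρ : Set (Fin n → ℝ)) (h : IsFaceOf ρ τ ∧ ρ ≠ τ),
                LinearMap.ker (r τ ρ h.1)) : Submodule (MvPolynomial (Fin n) ℝ)
                  (M τ)) : Set (M τ)) ∩ (g τ j : Set (M τ))))
    -- a degree-0 endomorphism of the sheaf
    (φ : ∀ σ : Set (Fin n → ℝ), M σ →ₗ[MvPolynomial (Fin n) ℝ] M σ)
    (hφr : ∀ σ τ (h : IsFaceOf τ σ), (r σ τ h).comp (φ σ) = (φ τ).comp (r σ τ h))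
    (hφdeg : ∀ σ ∈ Φ.cones, ∀ j : ℕ, ∀ x ∈ g σ j, φ σ x ∈ g σ j) :
    ∃ c : ℝ, ∀ σ ∈ Φ.cones, ∀ x : M σ, φ σ x = c • x := by
  classical
  set A := MvPolynomial (Fin n) ℝ with hA
  -- find the scalar `c` from the one-dimensional stalk at the origin
  obtain ⟨v, hv0, hvgen⟩ := finrank_eq_one_iff'.mp horigin.1
  obtain ⟨c, hcv⟩ := hvgen (φ ({0} : Set (Fin n → ℝ)) v)
  have hc : ∀ x : M ({0} : Set (Fin n → ℝ)), φ _ x = c • x := by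
    intro x
    obtain ⟨t, ht⟩ := hvgen x
    have : φ ({0} : Set (Fin n → ℝ)) (t • v) = t • φ _ v := by
      rw [← algebraMap_smul A t v, map_smul, algebraMap_smul]
    rw [← ht, this, ← hcv, smul_comm]
  refine ⟨c, ?_⟩
  suffices H : ∀ k : ℕ, ∀ σ ∈ Φ.cones, coneDim σ ≤ k → ∀ x : M σ, φ σ x = c • x by
    intro σ hσ x
    exact H (coneDim σ) σ hσ le_rfl x
  intro k
  induction k with
  | zero =>
    intro σ hσ hd x
    have hσ0 : σ = {0} := polyCone_dim_zero (Φ.poly σ hσ) (Nat.le_zero.mp hd)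
    subst hσ0
    exact hc x
  | succ k ih =>
    intro σ hσ hd x
    rcases Nat.lt_succ_iff_lt_or_eq.mp (Nat.lt_succ_of_le hd) with hlt | hk1
    · exact ih σ hσ (Nat.lt_succ_iff.mp hlt) x
    · -- `coneDim σ = k + 1`
      have hdim1 : 1 ≤ coneDim σ := by omega
      -- the endomorphism `ψ = φ - c • id` on the stalk at σ, A-linearly
      set ψ : M σ →ₗ[A] M σ :=
        { toFun := fun y => φ σ y - c • y
          map_add' := by
            intro a b
            show φ σ (a + b) - c • (a + b) = (φ σ a - c • a) + (φ σ b - c • b)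
            rw [map_add, smul_add]
            abel
          map_smul' := by
            intro p y
            show φ σ (p • y) - c • (p • y) = p • (φ σ y - c • y)
            rw [map_smul, smul_sub, smul_comm c p y] } with hψ
      -- ψ kills all proper faces via the inductive hypothesis
      have hface : ∀ ρ : Set (Fin n → ℝ), IsFaceOf ρ σ → ρ ≠ σ →
          ∀ y : M ρ, φ ρ y = c • y := by
        intro ρ hρ hne y
        have hρc : ρ ∈ Φ.cones := Φ.face_mem σ hσ ρ hρ
        have : coneDim ρ < coneDim σ := face_coneDim_lt hρ hne
        exact ih ρ hρc (by omega) y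
      -- the costalk
      set K : Submodule A (M σ) :=
        ⨅ (ρ : Set (Fin n → ℝ)) (h : IsFaceOf ρ σ ∧ ρ ≠ σ),
          LinearMap.ker (r σ ρ h.1) with hK
      have hψK : ∀ y : M σ, ψ y ∈ K := by
        intro y
        rw [hK]
        refine Submodule.mem_iInf _ |>.mpr fun ρ => Submodule.mem_iInf _ |>.mpr fun h => ?_
        rw [LinearMap.mem_ker]
        have h1 : r σ ρ h.1 (φ σ y) = φ ρ (r σ ρ h.1 y) := by
          have := hφr σ ρ h.1
          exact congrFun (congrArg DFunLike.coe this) y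
        have h2 : r σ ρ h.1 (c • y) = c • r σ ρ h.1 y := by
          rw [← algebraMap_smul A c y, map_smul, algebraMap_smul]
        show r σ ρ h.1 (φ σ y - c • y) = 0
        rw [map_sub, h1, h2, hface ρ h.1 h.2, sub_self]
      -- the high-degree part
      set T : Submodule ℝ (M σ) := ⨆ j ∈ {j : ℕ | coneDim σ < j}, g σ j with hT
      have hgT : ∀ j : ℕ, coneDim σ < j → g σ j ≤ T := by
        intro j hj
        exact le_iSup₂ (f := fun j (_ : j ∈ {j : ℕ | coneDim σ < j}) => g σ j) j hj
      have hTsmulHom : ∀ j : ℕ, coneDim σ < j → ∀ y ∈ g σ j, ∀ p : A, p • y ∈ T := by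
        intro j hj y hy p
        have hdecomp : p • y = ∑ i ∈ Finset.range (p.totalDegree + 1),
            (MvPolynomial.homogeneousComponent i p) • y := by
          rw [← Finset.sum_smul, MvPolynomial.sum_homogeneousComponent]
        rw [hdecomp]
        refine Submodule.sum_mem _ fun i _ => ?_
        have := hgSmul σ hσ i (MvPolynomial.homogeneousComponent i p)
          (MvPolynomial.homogeneousComponent_mem i p) j y hy
        exact hgT (j + 2 * i) (by omega) this
      have hTsmul : ∀ p : A, ∀ y ∈ T, p • y ∈ T := by
        intro p y hy
        have hle : T ≤ Submodule.comap
            ((LinearMap.lsmul A (M σ) p).restrictScalars ℝ) T := by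
          rw [hT]
          refine iSup₂_le fun j hj => ?_
          intro z hz
          exact hTsmulHom j hj z hz p
        exact hle hy
      -- `T` as an A-submodule
      set T' : Submodule A (M σ) :=
        { carrier := (T : Set (M σ))
          add_mem' := fun ha hb => T.add_mem ha hb
          zero_mem' := T.zero_mem
          smul_mem' := fun p y hy => hTsmul p y hy } with hT'
      -- the costalk lies in high degrees
      have hKT : K ≤ T' := by
        rw [hK, hcostalk σ hσ hdim1]
        rw [Submodule.span_le]
        intro z hz
        simp only [Set.mem_iUnion] at hz
        obtain ⟨j, hj, hzK, hzg⟩ := hz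
        exact hgT j hj hzg
      -- ψ kills homogeneous elements of degree < coneDim σ
      have hψlow : ∀ j : ℕ, j < coneDim σ → ∀ y ∈ g σ j, ψ y = 0 := by
        intro j hj y hy
        have h1 : ψ y ∈ g σ j := by
          show φ σ y - c • y ∈ g σ j
          exact Submodule.sub_mem _ (hφdeg σ hσ j y hy) (Submodule.smul_mem _ c hy)
        have h2 : ψ y ∈ T := hKT (hψK y)
        have hdisj : Disjoint (g σ j) T := by
          rw [hT]
          exact ((hgInt σ hσ).submodule_iSupIndep).disjoint_biSup
            (by simp only [Set.mem_setOf_eq]; omega)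
        exact (Submodule.disjoint_def.mp hdisj) _ h1 h2
      -- hence ψ = 0 since the stalk is generated in degrees < coneDim σ
      have hker : (⊤ : Submodule A (M σ)) ≤ LinearMap.ker ψ := by
        rw [hstalk σ hσ hdim1, Submodule.span_le]
        intro z hz
        simp only [Set.mem_iUnion] at hz
        obtain ⟨j, hj, hzg⟩ := hz
        exact LinearMap.mem_ker.mpr (hψlow j hj z hzg)
      have hx0 : ψ x = 0 := LinearMap.mem_ker.mp (hker Submodule.mem_top)
      have : φ σ x - c • x = 0 := hx0
      exact sub_eq_zero.mp this
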